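/- For every ε > 0 there exists δ > 0 such that for all x, y ∈ X and all n ∈ ℕ: if ρ(m_T(x,n), m_T(y,n)) < δ then Ē_n(x,y) < ε, where ρ is the Prokhorov metric; and conversely for every ε > 0 there exists δ > 0 such that Ē_n(x,y) < δ implies ρ(m_T(x,n), m_T(y,n)) < ε. -/

import Mathlib

open Filter MeasureTheory Topology
open scoped ENNReal NNReal Classical

noncomputable def EnDist {X : Type*} [MetricSpace X] (T : X → X) (n : ℕ) (x y : X) : ℝ :=
  ⨅ σ : Equiv.Perm (Fin n), (1 / (n : ℝ)) * ∑ k : Fin n, dist (T^[(k : ℕ)] x) (T^[((σ k) : ℕ)] y)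

/-- The empirical measure `m_T(x,n) = (1/n) Σ_{j<n} δ_{T^j x}`. -/
noncomputable def empMeas {X : Type*} [MeasurableSpace X] (T : X → X) (x : X) (n : ℕ) :
    Measure X :=
  ((n : ℝ≥0∞))⁻¹ • ∑ j ∈ Finset.range n, MeasureTheory.Measure.dirac (T^[j] x)


lemma empMeas_apply {X : Type*} [MeasurableSpace X] [MeasurableSingletonClass X]
    (T : X → X) (x : X) (n : ℕ) {B : Set X} (hB : MeasurableSet B) :
    empMeas T x n B
      = ((Finset.univ.filter fun k : Fin n => T^[(k : ℕ)] x ∈ B).card : ℝ≥0∞) / n := by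
  rw [empMeas, Measure.smul_apply, Measure.finset_sum_apply]
  simp only [Measure.dirac_apply' _ hB, Set.indicator_apply, Pi.one_apply]
  rw [← Fin.sum_univ_eq_sum_range (fun j => if T^[j] x ∈ B then (1:ℝ≥0∞) else 0)]
  rw [Finset.sum_boole]
  simp [ENNReal.div_eq_inv_mul, smul_eq_mul]

instance empMeas_finite {X : Type*} [MeasurableSpace X] [MeasurableSingletonClass X]
    (T : X → X) (x : X) (n : ℕ) : IsFiniteMeasure (empMeas T x n) := by
  constructor
  rw [empMeas_apply T x n MeasurableSet.univ]
  refine lt_of_le_of_lt (ENNReal.div_le_of_le_mul ?_) ENNReal.one_lt_top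
  simp [Finset.card_le_card (Finset.subset_univ _)]

lemma exists_perm_of_hall_defect {n m : ℕ} (hn : 0 < n) (R : Fin n → Fin n → Prop)
    (hall : ∀ s : Finset (Fin n),
      s.card ≤ (Finset.univ.filter fun j => ∃ i ∈ s, R i j).card + m) :
    ∃ σ : Equiv.Perm (Fin n), (Finset.univ.filter fun i => ¬ R i (σ i)).card ≤ m := by
  classical
  set t : Fin n → Finset (Fin n ⊕ Fin m) := fun i =>
    ((Finset.univ.filter fun j => R i j).image Sum.inl) ∪
      (Finset.univ.image (Sum.inr : Fin m → Fin n ⊕ Fin m)) with ht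
  have hcond : ∀ s : Finset (Fin n), s.card ≤ (s.biUnion t).card := by
    intro s
    rcases s.eq_empty_or_nonempty with rfl | hs
    · simp
    have hsub : s.biUnion t =
        ((Finset.univ.filter fun j => ∃ i ∈ s, R i j).image Sum.inl) ∪
          (Finset.univ.image (Sum.inr : Fin m → Fin n ⊕ Fin m)) := by
      ext z
      simp only [Finset.mem_biUnion, ht, Finset.mem_union, Finset.mem_image,
        Finset.mem_filter, Finset.mem_univ, true_and]
      constructor
      · rintro ⟨i, hi, (⟨j, hj, rfl⟩ | ⟨j, rfl⟩)⟩
        · exact Or.inl ⟨j, ⟨i, hi, hj⟩, rfl⟩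
        · exact Or.inr ⟨j, rfl⟩
      · rintro (⟨j, ⟨i, hi, hj⟩, rfl⟩ | ⟨j, rfl⟩)
        · exact ⟨i, hi, Or.inl ⟨j, hj, rfl⟩⟩
        · exact ⟨hs.choose, hs.choose_spec, Or.inr ⟨j, rfl⟩⟩
    rw [hsub, Finset.card_union_of_disjoint (by simp [Finset.disjoint_left])]
    rw [Finset.card_image_of_injective _ Sum.inl_injective,
      Finset.card_image_of_injective _ Sum.inr_injective]
    simpa using hall s
  obtain ⟨f, hf_inj, hf_mem⟩ :=
    (Finset.all_card_le_biUnion_card_iff_exists_injective t).mp hcond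
  set s₀ : Finset (Fin n) := Finset.univ.filter (fun i => (f i).isLeft) with hs₀
  set g : Fin n → Fin n := fun i => ((f i).getLeft?).getD ⟨0, hn⟩ with hg
  have hfl : ∀ i ∈ s₀, f i = Sum.inl (g i) := by
    intro i hi
    simp only [hs₀, Finset.mem_filter, Finset.mem_univ, true_and] at hi
    obtain ⟨j, hj⟩ := Sum.isLeft_iff.mp hi
    simp [hg, hj]
  have hgR : ∀ i ∈ s₀, R i (g i) := by
    intro i hi
    have hmem := hf_mem i
    rw [ht] at hmem
    simp only [Finset.mem_union, Finset.mem_image, Finset.mem_filter, Finset.mem_univ,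
      true_and] at hmem
    rcases hmem with ⟨j, hj, hj'⟩ | ⟨j, hj'⟩
    · rw [hfl i hi] at hj'
      rwa [← Sum.inl_injective hj']
    · rw [hfl i hi] at hj'
      exact absurd hj' (by simp)
  have hginj : Set.InjOn g s₀ := by
    intro a ha b hb hab
    apply hf_inj
    rw [hfl a ha, hfl b hb, hab]
  set img : Finset (Fin n) := s₀.image g with himg
  have hcards : (s₀ᶜ).card = (imgᶜ).card := by
    rw [Finset.card_compl, Finset.card_compl, himg,
      Finset.card_image_of_injOn hginj]
  set e := Finset.equivOfCardEq hcards with he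
  set h : Fin n → Fin n := fun i =>
    if hi : i ∈ s₀ then g i else (e ⟨i, Finset.mem_compl.mpr hi⟩ : Fin n) with hh
  have himg_mem : ∀ i ∈ s₀, g i ∈ img := fun i hi => Finset.mem_image_of_mem g hi
  have hcomp_mem : ∀ (i : Fin n) (hi : ¬ i ∈ s₀),
      ((e ⟨i, Finset.mem_compl.mpr hi⟩ : {x // x ∈ imgᶜ}) : Fin n) ∈ imgᶜ :=
    fun i hi => (e ⟨i, Finset.mem_compl.mpr hi⟩).2
  have hinj : Function.Injective h := by
    intro a b hab
    by_cases ha : a ∈ s₀ <;> by_cases hb : b ∈ s₀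
    · apply hginj ha hb
      simpa [hh, ha, hb] using hab
    · exfalso
      rw [hh] at hab
      simp only [ha, hb, dif_pos, dif_neg, not_false_iff] at hab
      have := hcomp_mem b hb
      rw [← hab] at this
      exact (Finset.mem_compl.mp this) (himg_mem a ha)
    · exfalso
      rw [hh] at hab
      simp only [ha, hb, dif_pos, dif_neg, not_false_iff] at hab
      have := hcomp_mem a ha
      rw [hab] at this
      exact (Finset.mem_compl.mp this) (himg_mem b hb)
    · rw [hh] at hab
      simp only [ha, hb, dif_neg, not_false_iff] at hab
      have := e.injective (Subtype.ext hab)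
      simpa using congrArg Subtype.val this
  refine ⟨Equiv.ofBijective h (Finite.injective_iff_bijective.mp hinj), ?_⟩
  have hsub2 : (Finset.univ.filter fun i =>
      ¬ R i ((Equiv.ofBijective h (Finite.injective_iff_bijective.mp hinj)) i)) ⊆ s₀ᶜ := by
    intro i hi
    simp only [Finset.mem_filter, Finset.mem_univ, true_and] at hi
    rw [Finset.mem_compl]
    intro hmem
    apply hi
    have : (Equiv.ofBijective h (Finite.injective_iff_bijective.mp hinj)) i = g i := by
      simp [Equiv.ofBijective_apply, hh, hmem]
    rw [this]
    exact hgR i hmem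
  refine le_trans (Finset.card_le_card hsub2) ?_
  rcases (s₀ᶜ).eq_empty_or_nonempty with hemp | ⟨i₀, hi₀⟩
  · simp [hemp]
  have hfr : ∀ i ∈ s₀ᶜ, ∃ j, f i = Sum.inr j := by
    intro i hi
    rw [Finset.mem_compl, hs₀] at hi
    simp only [Finset.mem_filter, Finset.mem_univ, true_and] at hi
    exact Sum.isRight_iff.mp (Sum.not_isLeft.mp hi)
  obtain ⟨j₀, hj₀⟩ := hfr i₀ hi₀
  have hio : Set.InjOn (fun i => ((f i).getRight?).getD j₀) ↑(s₀ᶜ) := by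
    intro a ha b hb hab
    obtain ⟨ja, hja⟩ := hfr a ha
    obtain ⟨jb, hjb⟩ := hfr b hb
    simp only [hja, hjb, Sum.getRight?, Option.getD_some] at hab
    apply hf_inj
    rw [hja, hjb, hab]
  have := Finset.card_le_card_of_injOn (s := s₀ᶜ) (t := (Finset.univ : Finset (Fin m)))
    (fun i => ((f i).getRight?).getD j₀) (fun i _ => Finset.mem_univ _) hio
  simpa using this

lemma dir2 {X : Type*} [MetricSpace X] [CompactSpace X]
    [MeasurableSpace X] [BorelSpace X] (T : X → X) :
    ∀ ε > (0 : ℝ), ∃ δ > (0 : ℝ), ∀ x y : X, ∀ n : ℕ, 0 < n →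
      (⨅ σ : Equiv.Perm (Fin n), (1 / (n : ℝ)) *
        ∑ k : Fin n, dist (T^[(k : ℕ)] x) (T^[((σ k) : ℕ)] y)) < δ →
      levyProkhorovDist (empMeas T x n) (empMeas T y n) < ε := by
  classical
  intro ε hε
  set r := ε / 2 with hr
  have hr0 : 0 < r := by positivity
  refine ⟨r * r, by positivity, ?_⟩
  intro x y n hn hE
  obtain ⟨σ, hσ⟩ := exists_lt_of_ciInf_lt hE
  have hnR : (0 : ℝ) < n := by exact_mod_cast hn
  set Bad : Finset (Fin n) :=
    Finset.univ.filter (fun k : Fin n => r ≤ dist (T^[(k : ℕ)] x) (T^[((σ k) : ℕ)] y)) with hBad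
  have hsum : ∑ k : Fin n, dist (T^[(k : ℕ)] x) (T^[((σ k) : ℕ)] y) < n * (r * r) := by
    have := (div_lt_iff₀' hnR).mp (by simpa [one_div, inv_mul_eq_div] using hσ)
    linarith
  have hBadcard : (Bad.card : ℝ) < n * r := by
    have h1 : (Bad.card : ℝ) * r ≤ ∑ k : Fin n, dist (T^[(k : ℕ)] x) (T^[((σ k) : ℕ)] y) := by
      calc (Bad.card : ℝ) * r = ∑ _k ∈ Bad, r := by rw [Finset.sum_const]; ring
        _ ≤ ∑ k ∈ Bad, dist (T^[(k : ℕ)] x) (T^[((σ k) : ℕ)] y) := by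
            apply Finset.sum_le_sum
            intro k hk
            exact (Finset.mem_filter.mp hk).2
        _ ≤ ∑ k : Fin n, dist (T^[(k : ℕ)] x) (T^[((σ k) : ℕ)] y) :=
            Finset.sum_le_sum_of_subset_of_nonneg (Finset.subset_univ _)
              (fun k _ _ => dist_nonneg)
    have h2 : (Bad.card : ℝ) * r < n * (r * r) := lt_of_le_of_lt h1 hsum
    nlinarith
  have key : levyProkhorovEDist (empMeas T x n) (empMeas T y n) ≤ ENNReal.ofReal r := by
    apply levyProkhorovEDist_le_of_forall
    intro ε' B hε'r hε'top hB
    have hε'0 : (0:ℝ) < ε'.toReal := lt_of_le_of_lt hr0.le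
      ((ENNReal.ofReal_lt_iff_lt_toReal hr0.le hε'top.ne).mp hε'r)
    have htr : r < ε'.toReal := (ENNReal.ofReal_lt_iff_lt_toReal hr0.le hε'top.ne).mp hε'r
    have hbadEN : ((Bad.card : ℝ≥0∞)) / n ≤ ε' := by
      have h3 : (Bad.card : ℝ≥0∞) ≤ (n : ℝ≥0∞) * ε' := by
        calc (Bad.card : ℝ≥0∞) = ENNReal.ofReal (Bad.card : ℝ) := by
              simp [ENNReal.ofReal_natCast]
          _ ≤ ENNReal.ofReal ((n : ℝ) * ε'.toReal) := by
              apply ENNReal.ofReal_le_ofReal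
              nlinarith
          _ = ENNReal.ofReal (n : ℝ) * ENNReal.ofReal ε'.toReal := by
              rw [ENNReal.ofReal_mul (by positivity)]
          _ = (n : ℝ≥0∞) * ε' := by
              rw [ENNReal.ofReal_natCast, ENNReal.ofReal_toReal hε'top.ne]
      calc ((Bad.card : ℝ≥0∞)) / n ≤ ((n : ℝ≥0∞) * ε') / n :=
            ENNReal.div_le_div_right h3 _
        _ = ε' := by
            rw [mul_comm, mul_div_assoc,
              ENNReal.div_self (by exact_mod_cast hn.ne') (by simp), mul_one]
    have hthickmble : MeasurableSet (Metric.thickening ε'.toReal B) :=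
      Metric.isOpen_thickening.measurableSet
    constructor
    · rw [empMeas_apply T x n hB, empMeas_apply T y n hthickmble]
      have hcount : ((Finset.univ.filter fun k : Fin n => T^[(k : ℕ)] x ∈ B).card : ℕ)
          ≤ (Finset.univ.filter fun j : Fin n =>
              T^[(j : ℕ)] y ∈ Metric.thickening ε'.toReal B).card + Bad.card := by
        have hsub : (Finset.univ.filter fun k : Fin n => T^[(k : ℕ)] x ∈ B)
            ⊆ (Finset.univ.filter fun k : Fin n => T^[(k : ℕ)] x ∈ B ∧ k ∉ Bad) ∪ Bad := by
          intro k hk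
          by_cases hkB : k ∈ Bad
          · exact Finset.mem_union_right _ hkB
          · exact Finset.mem_union_left _ (by
              simp only [Finset.mem_filter, Finset.mem_univ, true_and] at hk ⊢
              exact ⟨hk, hkB⟩)
        refine le_trans (Finset.card_le_card hsub) (le_trans (Finset.card_union_le _ _) ?_)
        refine Nat.add_le_add_right (Finset.card_le_card_of_injOn (fun k => σ k) ?_
          (Set.injOn_of_injective σ.injective)) _
        · intro k hk
          simp only [Finset.mem_coe, Finset.mem_filter, Finset.mem_univ, true_and, hBad] at hk ⊢
          obtain ⟨hkB, hkG⟩ := hk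
          rw [Metric.mem_thickening_iff]
          refine ⟨T^[(k : ℕ)] x, hkB, ?_⟩
          rw [dist_comm]
          calc dist (T^[(k : ℕ)] x) (T^[((σ k) : ℕ)] y) < r := by
                by_contra hc
                exact hkG (by simpa [hBad] using not_lt.mp hc)
            _ < ε'.toReal := htr
      calc ((Finset.univ.filter fun k : Fin n => T^[(k : ℕ)] x ∈ B).card : ℝ≥0∞) / n
          ≤ (((Finset.univ.filter fun j : Fin n =>
              T^[(j : ℕ)] y ∈ Metric.thickening ε'.toReal B).card + Bad.card : ℕ) : ℝ≥0∞) / n :=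
            ENNReal.div_le_div_right (by exact_mod_cast hcount) _
        _ = ((Finset.univ.filter fun j : Fin n =>
              T^[(j : ℕ)] y ∈ Metric.thickening ε'.toReal B).card : ℝ≥0∞) / n
              + (Bad.card : ℝ≥0∞) / n := by
            push_cast
            rw [ENNReal.add_div]
        _ ≤ ((Finset.univ.filter fun j : Fin n =>
              T^[(j : ℕ)] y ∈ Metric.thickening ε'.toReal B).card : ℝ≥0∞) / n + ε' := by
            gcongr
    · rw [empMeas_apply T y n hB, empMeas_apply T x n hthickmble]
      have hre : (Finset.univ.filter fun j : Fin n => T^[(j : ℕ)] y ∈ B).card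
          = (Finset.univ.filter fun k : Fin n => T^[((σ k) : ℕ)] y ∈ B).card := by
        apply Finset.card_bij' (fun j _ => σ⁻¹ j) (fun k _ => σ k)
        · intro j hj
          simp only [Finset.mem_filter, Finset.mem_univ, true_and] at hj ⊢
          simpa using hj
        · intro k hk
          simp only [Finset.mem_filter, Finset.mem_univ, true_and] at hk ⊢
          exact hk
        · intro j _; simp
        · intro k _; simp
      have hcount : (Finset.univ.filter fun k : Fin n => T^[((σ k) : ℕ)] y ∈ B).card
          ≤ (Finset.univ.filter fun k : Fin n =>
              T^[(k : ℕ)] x ∈ Metric.thickening ε'.toReal B).card + Bad.card := by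
        have hsub : (Finset.univ.filter fun k : Fin n => T^[((σ k) : ℕ)] y ∈ B)
            ⊆ (Finset.univ.filter fun k : Fin n =>
                T^[(k : ℕ)] x ∈ Metric.thickening ε'.toReal B) ∪ Bad := by
          intro k hk
          by_cases hkB : k ∈ Bad
          · exact Finset.mem_union_right _ hkB
          · apply Finset.mem_union_left
            simp only [Finset.mem_filter, Finset.mem_univ, true_and] at hk ⊢
            rw [Metric.mem_thickening_iff]
            refine ⟨T^[((σ k) : ℕ)] y, hk, ?_⟩
            calc dist (T^[(k : ℕ)] x) (T^[((σ k) : ℕ)] y) < r := by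
                  by_contra hc
                  exact hkB (by simpa [hBad] using not_lt.mp hc)
              _ < ε'.toReal := htr
        exact le_trans (Finset.card_le_card hsub) (Finset.card_union_le _ _)
      rw [hre]
      calc ((Finset.univ.filter fun k : Fin n => T^[((σ k) : ℕ)] y ∈ B).card : ℝ≥0∞) / n
          ≤ (((Finset.univ.filter fun k : Fin n =>
              T^[(k : ℕ)] x ∈ Metric.thickening ε'.toReal B).card + Bad.card : ℕ) : ℝ≥0∞) / n :=
            ENNReal.div_le_div_right (by exact_mod_cast hcount) _
        _ = ((Finset.univ.filter fun k : Fin n =>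
              T^[(k : ℕ)] x ∈ Metric.thickening ε'.toReal B).card : ℝ≥0∞) / n
              + (Bad.card : ℝ≥0∞) / n := by
            push_cast
            rw [ENNReal.add_div]
        _ ≤ ((Finset.univ.filter fun k : Fin n =>
              T^[(k : ℕ)] x ∈ Metric.thickening ε'.toReal B).card : ℝ≥0∞) / n + ε' := by
            gcongr
  have : levyProkhorovDist (empMeas T x n) (empMeas T y n) ≤ r :=
    ENNReal.toReal_le_of_le_ofReal hr0.le key
  calc levyProkhorovDist (empMeas T x n) (empMeas T y n) ≤ r := this
    _ < ε := by rw [hr]; linarith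

lemma dir1 {X : Type*} [MetricSpace X] [CompactSpace X]
    [MeasurableSpace X] [BorelSpace X] (T : X → X) :
    ∀ ε > (0 : ℝ), ∃ δ > (0 : ℝ), ∀ x y : X, ∀ n : ℕ, 0 < n →
      levyProkhorovDist (empMeas T x n) (empMeas T y n) < δ →
      (⨅ σ : Equiv.Perm (Fin n), (1 / (n : ℝ)) *
        ∑ k : Fin n, dist (T^[(k : ℕ)] x) (T^[((σ k) : ℕ)] y)) < ε := by
  classical
  intro ε hε
  set D := Metric.diam (Set.univ : Set X) with hD
  have hD0 : (0:ℝ) ≤ D := Metric.diam_nonneg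
  set δ := ε / (2 * (D + 1)) with hδ
  have hδ0 : 0 < δ := by positivity
  refine ⟨δ, hδ0, ?_⟩
  intro x y n hn hLP
  have hnR : (0 : ℝ) < n := by exact_mod_cast hn
  have hed : levyProkhorovEDist (empMeas T x n) (empMeas T y n) < ENNReal.ofReal δ := by
    rw [ENNReal.lt_ofReal_iff_toReal_lt (levyProkhorovEDist_ne_top _ _)]
    exact hLP
  set m := ⌊(n : ℝ) * δ⌋₊ with hm
  have hmle : (m : ℝ) ≤ n * δ := Nat.floor_le (by positivity)
  have hall : ∀ s : Finset (Fin n), s.card ≤ (Finset.univ.filter fun j : Fin n =>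
      ∃ i ∈ s, dist (T^[(j : ℕ)] y) (T^[(i : ℕ)] x) < δ).card + m := by
    intro s
    set B : Set X := ↑(s.image fun i : Fin n => T^[(i : ℕ)] x) with hB
    have hBm : MeasurableSet B := (s.image fun i : Fin n => T^[(i : ℕ)] x).measurableSet
    have h1 := left_measure_le_of_levyProkhorovEDist_lt hed hBm
    rw [ENNReal.toReal_ofReal hδ0.le] at h1
    rw [empMeas_apply T x n hBm,
      empMeas_apply T y n Metric.isOpen_thickening.measurableSet] at h1
    have hthick : (Finset.univ.filter fun k : Fin n => T^[(k : ℕ)] y ∈ Metric.thickening δ B)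
        = (Finset.univ.filter fun j : Fin n =>
            ∃ i ∈ s, dist (T^[(j : ℕ)] y) (T^[(i : ℕ)] x) < δ) := by
      ext j
      simp only [Finset.mem_filter, Finset.mem_univ, true_and, Metric.mem_thickening_iff,
        hB, Finset.coe_image, Set.mem_image, Finset.mem_coe]
      constructor
      · rintro ⟨z, ⟨i, hi, rfl⟩, hz⟩
        exact ⟨i, hi, hz⟩
      · rintro ⟨i, hi, hz⟩
        exact ⟨T^[(i : ℕ)] x, ⟨i, hi, rfl⟩, hz⟩
    rw [hthick] at h1
    set N := (Finset.univ.filter fun j : Fin n =>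
      ∃ i ∈ s, dist (T^[(j : ℕ)] y) (T^[(i : ℕ)] x) < δ) with hN
    -- real inequality
    have h2 : (s.card : ℝ) / n ≤ (N.card : ℝ) / n + δ := by
      have hfin : ((N.card : ℝ≥0∞) / n + ENNReal.ofReal δ) ≠ ⊤ := by
        apply ENNReal.add_ne_top.mpr
        constructor
        · exact (ENNReal.div_lt_top (by simp) (by exact_mod_cast hn.ne')).ne
        · exact ENNReal.ofReal_ne_top
      have h3 : ((s.card : ℝ≥0∞) / n) ≤ ((N.card : ℝ≥0∞) / n + ENNReal.ofReal δ) := by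
        refine le_trans (ENNReal.div_le_div_right (Nat.cast_le.mpr
          (Finset.card_le_card ?_)) _) h1
        intro i _
        simp only [Finset.mem_filter, Finset.mem_univ, true_and, hB, Finset.coe_image,
          Set.mem_image, Finset.mem_coe]
        exact ⟨i, by assumption, rfl⟩
      have := ENNReal.toReal_mono hfin h3
      rw [ENNReal.toReal_add ((ENNReal.div_lt_top (by simp) (by exact_mod_cast hn.ne')).ne)
        ENNReal.ofReal_ne_top, ENNReal.toReal_div, ENNReal.toReal_div,
        ENNReal.toReal_ofReal hδ0.le] at this
      simpa using this
    -- nat inequality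
    by_contra hcon
    push_neg at hcon
    have hcon' : (N.card : ℝ) + m + 1 ≤ s.card := by exact_mod_cast hcon
    have hfl : (n : ℝ) * δ < m + 1 := Nat.lt_floor_add_one _
    have h4 : (s.card : ℝ) ≤ N.card + n * δ := by
      have := (div_le_div_iff_of_pos_right hnR).mpr h2
      calc (s.card : ℝ) = ((s.card : ℝ) / n) * n := by field_simp
        _ ≤ ((N.card : ℝ) / n + δ) * n := by nlinarith [h2]
        _ = N.card + n * δ := by field_simp
    linarith
  obtain ⟨σ, hσ⟩ := exists_perm_of_hall_defect hn
    (fun i j => dist (T^[(j : ℕ)] y) (T^[(i : ℕ)] x) < δ) hall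
  -- bound the sum for σ
  have hsum : ∑ k : Fin n, dist (T^[(k : ℕ)] x) (T^[((σ k) : ℕ)] y) ≤ n * δ + m * D := by
    rw [← Finset.sum_filter_add_sum_filter_not Finset.univ
      (fun i : Fin n => dist (T^[((σ i) : ℕ)] y) (T^[(i : ℕ)] x) < δ)]
    have hbound1 : ∑ k ∈ (Finset.univ.filter fun i : Fin n =>
        dist (T^[((σ i) : ℕ)] y) (T^[(i : ℕ)] x) < δ),
        dist (T^[(k : ℕ)] x) (T^[((σ k) : ℕ)] y) ≤ (n : ℝ) * δ := by
      calc _ ≤ ∑ _k ∈ (Finset.univ.filter fun i : Fin n =>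
            dist (T^[((σ i) : ℕ)] y) (T^[(i : ℕ)] x) < δ), δ := by
            apply Finset.sum_le_sum
            intro k hk
            rw [dist_comm]
            exact le_of_lt (Finset.mem_filter.mp hk).2
        _ ≤ (n : ℝ) * δ := by
            rw [Finset.sum_const, nsmul_eq_mul]
            apply mul_le_mul_of_nonneg_right _ hδ0.le
            exact_mod_cast le_trans (Finset.card_le_card (Finset.subset_univ _)) (by simp)
    have hbound2 : ∑ k ∈ (Finset.univ.filter fun i : Fin n =>
        ¬ dist (T^[((σ i) : ℕ)] y) (T^[(i : ℕ)] x) < δ),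
        dist (T^[(k : ℕ)] x) (T^[((σ k) : ℕ)] y) ≤ (m : ℝ) * D := by
      calc _ ≤ ∑ _k ∈ (Finset.univ.filter fun i : Fin n =>
            ¬ dist (T^[((σ i) : ℕ)] y) (T^[(i : ℕ)] x) < δ), D := by
            apply Finset.sum_le_sum
            intro k hk
            exact Metric.dist_le_diam_of_mem isCompact_univ.isBounded
              (Set.mem_univ _) (Set.mem_univ _)
        _ ≤ (m : ℝ) * D := by
            rw [Finset.sum_const, nsmul_eq_mul]
            exact mul_le_mul_of_nonneg_right (by exact_mod_cast hσ) hD0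
    linarith
  have hval : (1 / (n : ℝ)) * ∑ k : Fin n, dist (T^[(k : ℕ)] x) (T^[((σ k) : ℕ)] y) < ε := by
    have h5 : (1 / (n : ℝ)) * ∑ k : Fin n, dist (T^[(k : ℕ)] x) (T^[((σ k) : ℕ)] y)
        ≤ (1 / (n : ℝ)) * (n * δ + (n * δ) * D) := by
      apply mul_le_mul_of_nonneg_left _ (by positivity)
      have : (m : ℝ) * D ≤ (n * δ) * D := mul_le_mul_of_nonneg_right hmle hD0
      linarith
    have h6 : (1 / (n : ℝ)) * (n * δ + (n * δ) * D) = δ * (1 + D) := by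
      field_simp
    have h7 : δ * (1 + D) = ε / 2 := by
      rw [hδ]
      field_simp
      ring
    calc (1 / (n : ℝ)) * ∑ k : Fin n, dist (T^[(k : ℕ)] x) (T^[((σ k) : ℕ)] y)
        ≤ ε / 2 := by rw [← h7, ← h6]; exact h5
      _ < ε := by linarith
  have hbdd : BddBelow (Set.range fun σ : Equiv.Perm (Fin n) =>
      (1 / (n : ℝ)) * ∑ k : Fin n, dist (T^[(k : ℕ)] x) (T^[((σ k) : ℕ)] y)) := by
    refine ⟨0, ?_⟩
    rintro _ ⟨τ, rfl⟩
    positivity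
  exact lt_of_le_of_lt (ciInf_le hbdd σ) hval

/-- uniform equivalence of the Prokhorov distance of empirical measures and
`Ē_n`: for every `ε > 0` there is `δ > 0` such that for all `x, y` and all `n ≥ 1`,
`ρ(m_T(x,n), m_T(y,n)) < δ` implies `Ē_n(x,y) < ε`; and conversely `Ē_n(x,y) < δ` implies
`ρ(m_T(x,n), m_T(y,n)) < ε`. -/
theorem prokhorov_EnDist_uniformly_equivalent {X : Type*} [MetricSpace X] [CompactSpace X]
    [MeasurableSpace X] [BorelSpace X] (T : X → X) (hT : Continuous T) :
    (∀ ε > (0 : ℝ), ∃ δ > (0 : ℝ), ∀ x y : X, ∀ n : ℕ, 0 < n →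
      levyProkhorovDist (empMeas T x n) (empMeas T y n) < δ → EnDist T n x y < ε) ∧
    (∀ ε > (0 : ℝ), ∃ δ > (0 : ℝ), ∀ x y : X, ∀ n : ℕ, 0 < n →
      EnDist T n x y < δ → levyProkhorovDist (empMeas T x n) (empMeas T y n) < ε) := by
  constructor
  · intro ε hε
    obtain ⟨δ, hδ, h⟩ := dir1 T ε hε
    exact ⟨δ, hδ, fun x y n hn hLP => h x y n hn hLP⟩
  · intro ε hε
    obtain ⟨δ, hδ, h⟩ := dir2 T ε hε
    exact ⟨δ, hδ, fun x y n hn hE => h x y n hn hE⟩
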